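/- arXiv:2404.15277 — 2 statements merged into one kernel-verified Lean document; each statement's English description precedes it below -/
import Mathlib

section
/- Let plate matrices E₀, E₁, E₂, M and coupling matrices R₁, R₂ be square of size n, let (k, φ) with φ ≠ 0 solve the nonlinear eigenvalue problem (−k²E₀ + ikE₁ − E₂ + ω²M + iκ_{y,1}R₁ + iκ_{y,2}R₂)φ = 0, where κ_{y,j} = √(κⱼ² − k²). Then the tuple (ik, iκ_{y,1}, iκ_{y,2}, ξ₀) with ξ₀ = −k² is an eigenvalue of the four-parameter eigenvalue problem consisting of: (i) (−E₂ + ω²M + ik E₁ + iκ_{y,1}R₁ + iκ_{y,2}R₂ + ξ₀E₀)φ = 0; (ii) ([[0,−κ₁²],[1,0]] + iκ_{y,1}I + ξ₀[[0,−1],[0,0]])x₁ = 0 for some x₁ ≠ 0; (iii) the analogous equation with κ₂, κ_{y,2} and some x₂ ≠ 0; (iv) ([[0,0],[0,1]] + ik[[0,1],[1,0]] + ξ₀[[1,0],[0,0]])x₃ = 0 for some x₃ ≠ 0. -/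
open Matrix Complex

/-- Theorem 1 of the paper: a solution of the nonlinear eigenvalue problem of the
fluid-coupled plate yields a solution of the four-parameter eigenvalue problem. -/
theorem stmt_12 (n : ℕ)
    (E₀ E₁ E₂ M R₁ R₂ : Matrix (Fin n) (Fin n) ℂ)
    (ω κ₁ κ₂ k κy₁ κy₂ : ℂ)
    (hκy₁ : κy₁ ^ 2 = κ₁ ^ 2 - k ^ 2)
    (hκy₂ : κy₂ ^ 2 = κ₂ ^ 2 - k ^ 2)
    (φ : Fin n → ℂ) (hφ : φ ≠ 0)
    (h : ((-k ^ 2) • E₀ + (Complex.I * k) • E₁ - E₂ + (ω ^ 2) • M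
          + (Complex.I * κy₁) • R₁ + (Complex.I * κy₂) • R₂).mulVec φ = 0)
    (ξ₀ : ℂ) (hξ₀ : ξ₀ = -k ^ 2) :
    (-E₂ + (ω ^ 2) • M + (Complex.I * k) • E₁
        + (Complex.I * κy₁) • R₁ + (Complex.I * κy₂) • R₂ + ξ₀ • E₀).mulVec φ = 0 ∧
    (∃ x₁ : Fin 2 → ℂ, x₁ ≠ 0 ∧
      (!![0, -κ₁ ^ 2; 1, 0] + (Complex.I * κy₁) • (1 : Matrix (Fin 2) (Fin 2) ℂ)
        + ξ₀ • !![0, -1; 0, 0]).mulVec x₁ = 0) ∧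
    (∃ x₂ : Fin 2 → ℂ, x₂ ≠ 0 ∧
      (!![0, -κ₂ ^ 2; 1, 0] + (Complex.I * κy₂) • (1 : Matrix (Fin 2) (Fin 2) ℂ)
        + ξ₀ • !![0, -1; 0, 0]).mulVec x₂ = 0) ∧
    (∃ x₃ : Fin 2 → ℂ, x₃ ≠ 0 ∧
      (!![0, 0; 0, 1] + (Complex.I * k) • !![0, 1; 1, 0]
        + ξ₀ • !![(1:ℂ), 0; 0, 0]).mulVec x₃ = 0) := by
  subst hξ₀
  refine ⟨?_, ⟨![-(Complex.I * κy₁), 1], ?_, ?_⟩,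
    ⟨![-(Complex.I * κy₂), 1], ?_, ?_⟩, ⟨![1, -(Complex.I * k)], ?_, ?_⟩⟩
  · rw [← h]; congr 1; abel
  · intro hc; have := congrFun hc 1; simp at this
  · funext i; fin_cases i <;>
      simp [mulVec, dotProduct, Fin.sum_univ_two, Matrix.one_apply] <;>
      linear_combination hκy₁ - κy₁ ^ 2 * Complex.I_sq
  · intro hc; have := congrFun hc 1; simp at this
  · funext i; fin_cases i <;>
      simp [mulVec, dotProduct, Fin.sum_univ_two, Matrix.one_apply] <;>
      linear_combination hκy₂ - κy₂ ^ 2 * Complex.I_sq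
  · intro hc; have := congrFun hc 0; simp at this
  · funext i; fin_cases i <;>
      simp [mulVec, dotProduct, Fin.sum_univ_two] <;>
      linear_combination -k ^ 2 * Complex.I_sq
end

section
/- For a regular r-parameter eigenvalue problem with matrices A_{ij} (A_{ij} of size nᵢ×nᵢ), if (A_{i0} + λ₁A_{i1} + ⋯ + λ_rA_{ir})xᵢ = 0 with xᵢ ≠ 0 for all i, then z = x₁ ⊗ ⋯ ⊗ x_r satisfies Δᵢz = λᵢΔ₀z for each i = 1,…,r, where Δ₀ = Σ_{σ∈S_r} sgn(σ) A_{1σ(1)} ⊗ ⋯ ⊗ A_{rσ(r)} and Δᵢ is obtained from Δ₀ by replacing the i-th column index set {A_{1i},…,A_{ri}} with {−A_{10},…,−A_{r0}} in the Leibniz-type determinant formula. -/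
open Matrix

/-- Kronecker-type product of a family of square matrices, acting on the
product index type. -/
def kronFamily {r : ℕ} {n : Fin r → ℕ}
    (B : (i : Fin r) → Matrix (Fin (n i)) (Fin (n i)) ℂ) :
    Matrix ((i : Fin r) → Fin (n i)) ((i : Fin r) → Fin (n i)) ℂ :=
  fun p q => ∏ i, B i (p i) (q i)

/-- Operator determinant Δ₀ of an r-parameter eigenvalue problem:
generalized Leibniz formula with Kronecker products in place of products.
`A i j` is the matrix A_{i,j}, with `j = 0` the constant term and
`j = l.succ` the coefficient of λ_l. -/
noncomputable def opDet₀ {r : ℕ} {n : Fin r → ℕ}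
    (A : (i : Fin r) → Fin (r + 1) → Matrix (Fin (n i)) (Fin (n i)) ℂ) :
    Matrix ((i : Fin r) → Fin (n i)) ((i : Fin r) → Fin (n i)) ℂ :=
  ∑ σ : Equiv.Perm (Fin r),
    (Equiv.Perm.sign σ : ℤ) • kronFamily (fun i => A i (σ i).succ)

/-- Operator determinant Δ_j : replace column j by the (negated) constant
terms −A_{i,0} in the Leibniz formula. -/
noncomputable def opDet {r : ℕ} {n : Fin r → ℕ}
    (A : (i : Fin r) → Fin (r + 1) → Matrix (Fin (n i)) (Fin (n i)) ℂ)
    (j : Fin r) :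
    Matrix ((i : Fin r) → Fin (n i)) ((i : Fin r) → Fin (n i)) ℂ :=
  -∑ σ : Equiv.Perm (Fin r),
    (Equiv.Perm.sign σ : ℤ) •
      kronFamily (fun i => if σ i = j then A i 0 else A i (σ i).succ)

theorem aux_sum_mulVec {m k : Type*} [Fintype k] {ι : Type*} (s : Finset ι)
    (M : ι → Matrix m k ℂ) (z : k → ℂ) (p : m) :
    (∑ σ ∈ s, M σ).mulVec z p = ∑ σ ∈ s, (M σ).mulVec z p := by
  simp only [Matrix.mulVec, dotProduct, Matrix.sum_apply, Finset.sum_mul]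
  rw [Finset.sum_comm]

theorem aux_smul_mulVec {m k : Type*} [Fintype k] (c : ℤ) (M : Matrix m k ℂ)
    (z : k → ℂ) (p : m) : (c • M).mulVec z p = c • (M.mulVec z p) := by
  simp [Matrix.mulVec, dotProduct, Finset.smul_sum, smul_mul_assoc, mul_assoc]


/-- Atkinson's operator-determinant relation for a regular r-parameter
eigenvalue problem. -/
theorem stmt_15 (r : ℕ) (n : Fin r → ℕ)
    (A : (i : Fin r) → Fin (r + 1) → Matrix (Fin (n i)) (Fin (n i)) ℂ)
    (hreg : IsUnit (opDet₀ A))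
    (lam : Fin r → ℂ) (x : (i : Fin r) → Fin (n i) → ℂ)
    (hx : ∀ i, x i ≠ 0)
    (h : ∀ i, (A i 0 + ∑ l : Fin r, lam l • A i l.succ).mulVec (x i) = 0)
    (z : ((i : Fin r) → Fin (n i)) → ℂ) (hz : ∀ p, z p = ∏ i, x i (p i)) :
    ∀ j : Fin r, (opDet A j).mulVec z = lam j • (opDet₀ A).mulVec z := by
  intro j
  funext p
  set w : (i : Fin r) → Fin (r + 1) → ℂ := fun i l => (A i l).mulVec (x i) (p i) with hwdef
  have hw0 : ∀ i, w i 0 = -∑ l : Fin r, lam l * w i l.succ := by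
    intro i
    have h1 := congrFun (h i) (p i)
    simp only [Matrix.add_mulVec, Pi.add_apply, Pi.zero_apply] at h1
    rw [aux_sum_mulVec] at h1
    have h2 : ∀ l : Fin r, ((lam l • A i l.succ).mulVec (x i)) (p i)
        = lam l * w i l.succ := by
      intro l
      simp [Matrix.smul_mulVec, hwdef]
    simp only [h2] at h1
    linear_combination h1
  have hk : ∀ B : (i : Fin r) → Matrix (Fin (n i)) (Fin (n i)) ℂ,
      (kronFamily B).mulVec z p = ∏ i, (B i).mulVec (x i) (p i) := by
    intro B
    simp only [Matrix.mulVec, dotProduct, kronFamily, hz, ← Finset.prod_mul_distrib]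
    rw [Finset.prod_univ_sum, Fintype.piFinset_univ]
  -- the matrix N : row l, entries i ↦ w i l.succ
  set N : Matrix (Fin r) (Fin r) ℂ := fun l i => w i l.succ with hNdef
  have hR : (opDet₀ A).mulVec z p = N.det := by
    rw [opDet₀, aux_sum_mulVec]
    rw [Matrix.det_apply]
    refine Finset.sum_congr rfl fun σ _ => ?_
    rw [aux_smul_mulVec, hk]
    simp [Units.smul_def, hwdef, hNdef]
  have hL : (opDet A j).mulVec z p = -(N.updateRow j (fun i => w i 0)).det := by
    rw [opDet, Matrix.neg_mulVec, Pi.neg_apply, neg_inj, aux_sum_mulVec]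
    rw [Matrix.det_apply]
    refine Finset.sum_congr rfl fun σ _ => ?_
    rw [aux_smul_mulVec, hk]
    simp only [Units.smul_def]
    congr 1
    refine Finset.prod_congr rfl fun i _ => ?_
    rw [Matrix.updateRow_apply]
    split <;> simp [hwdef, hNdef]
  have hrow : (fun i => w i 0) = ∑ l : Fin r, (-lam l) • N l := by
    funext i
    simp [hw0 i, hNdef, Finset.sum_apply, Finset.sum_neg_distrib]
  rw [hL, Pi.smul_apply, hR, hrow, Matrix.det_updateRow_sum]
  simp only [smul_eq_mul]
  ring
end
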